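/- Let Λ_t be the rank-3 lattice {x ∈ ℤ⁴ : x₀ + x₁ + x₂ + x₃ = 0}, with the symmetric group S₄ acting by permuting the four coordinates. Then the second group cohomology H²(S₄, Λ_t) is isomorphic to ℤ/2ℤ. -/

import Mathlib

/-- The tetrahedral lattice `Λ_t = {x ∈ ℤ⁴ : x₀ + x₁ + x₂ + x₃ = 0}`,
the sum-zero sublattice of `ℤ⁴`. -/
def tetrahedralLattice : Submodule ℤ (Fin 4 → ℤ) where
  carrier := {x | ∑ i, x i = 0}
  add_mem' := by
    intro a b ha hb
    simp only [Set.mem_setOf_eq, Pi.add_apply, Finset.sum_add_distrib] at *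
    simp [ha, hb]
  zero_mem' := by simp
  smul_mem' := by
    intro c x hx
    simp only [Set.mem_setOf_eq, Pi.smul_apply, smul_eq_mul, ← Finset.mul_sum] at *
    simp [hx]

private def mtab : Fin 6 → Fin 6 → Fin 6 :=
  ![![0, 1, 2, 3, 4, 5], ![1, 0, 4, 5, 2, 3], ![2, 3, 0, 1, 5, 4], ![3, 2, 5, 4, 0, 1], ![4, 5, 1, 0, 3, 2], ![5, 4, 3, 2, 1, 0]]

private theorem s3cert (p : Fin 6 → Fin 6 → ℤ)
    (hc : ∀ i j k : Fin 6, p j k - p (mtab i j) k + p i (mtab j k) - p i j = 0)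
    (hpar : (2:ℤ) ∣ p 2 2 + p 0 0) :
    ∃ v : Fin 6 → ℤ, ∀ i j, p i j = v j - v (mtab i j) + v i := by
  obtain ⟨kk, hkk⟩ := hpar
  have h001 : p 0 1 - p 0 1 + p 0 1 - p 0 0 = 0 := hc 0 0 1
  have h002 : p 0 2 - p 0 2 + p 0 2 - p 0 0 = 0 := hc 0 0 2
  have h003 : p 0 3 - p 0 3 + p 0 3 - p 0 0 = 0 := hc 0 0 3
  have h004 : p 0 4 - p 0 4 + p 0 4 - p 0 0 = 0 := hc 0 0 4
  have h005 : p 0 5 - p 0 5 + p 0 5 - p 0 0 = 0 := hc 0 0 5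
  have h100 : p 0 0 - p 1 0 + p 1 0 - p 1 0 = 0 := hc 1 0 0
  have h112 : p 1 2 - p 0 2 + p 1 4 - p 1 1 = 0 := hc 1 1 2
  have h113 : p 1 3 - p 0 3 + p 1 5 - p 1 1 = 0 := hc 1 1 3
  have h120 : p 2 0 - p 4 0 + p 1 2 - p 1 2 = 0 := hc 1 2 0
  have h121 : p 2 1 - p 4 1 + p 1 3 - p 1 2 = 0 := hc 1 2 1
  have h122 : p 2 2 - p 4 2 + p 1 0 - p 1 2 = 0 := hc 1 2 2
  have h123 : p 2 3 - p 4 3 + p 1 1 - p 1 2 = 0 := hc 1 2 3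
  have h124 : p 2 4 - p 4 4 + p 1 5 - p 1 2 = 0 := hc 1 2 4
  have h125 : p 2 5 - p 4 5 + p 1 4 - p 1 2 = 0 := hc 1 2 5
  have h130 : p 3 0 - p 5 0 + p 1 3 - p 1 3 = 0 := hc 1 3 0
  have h131 : p 3 1 - p 5 1 + p 1 2 - p 1 3 = 0 := hc 1 3 1
  have h132 : p 3 2 - p 5 2 + p 1 5 - p 1 3 = 0 := hc 1 3 2
  have h133 : p 3 3 - p 5 3 + p 1 4 - p 1 3 = 0 := hc 1 3 3
  have h134 : p 3 4 - p 5 4 + p 1 0 - p 1 3 = 0 := hc 1 3 4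
  have h135 : p 3 5 - p 5 5 + p 1 1 - p 1 3 = 0 := hc 1 3 5
  have h200 : p 0 0 - p 2 0 + p 2 0 - p 2 0 = 0 := hc 2 0 0
  have h210 : p 1 0 - p 3 0 + p 2 1 - p 2 1 = 0 := hc 2 1 0
  have h211 : p 1 1 - p 3 1 + p 2 0 - p 2 1 = 0 := hc 2 1 1
  have h212 : p 1 2 - p 3 2 + p 2 4 - p 2 1 = 0 := hc 2 1 2
  have h213 : p 1 3 - p 3 3 + p 2 5 - p 2 1 = 0 := hc 2 1 3
  have h214 : p 1 4 - p 3 4 + p 2 2 - p 2 1 = 0 := hc 2 1 4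
  have h215 : p 1 5 - p 3 5 + p 2 3 - p 2 1 = 0 := hc 2 1 5
  have h221 : p 2 1 - p 0 1 + p 2 3 - p 2 2 = 0 := hc 2 2 1
  have h224 : p 2 4 - p 0 4 + p 2 5 - p 2 2 = 0 := hc 2 2 4
  have h241 : p 4 1 - p 5 1 + p 2 5 - p 2 4 = 0 := hc 2 4 1
  refine ⟨![(p 5 2 + p 5 3 - p 5 5 : ℤ), (p 4 5 - p 5 4 + kk : ℤ), (kk : ℤ), (p 4 4 - 2 * p 4 5 + 2 * p 5 3 : ℤ), (p 4 4 - p 4 5 + p 5 3 : ℤ), (-p 4 4 + 2 * p 4 5 - p 5 3 + kk : ℤ)], ?_⟩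
  intro i j
  fin_cases i <;> fin_cases j
  · show p 0 0 = (p 5 2 + p 5 3 - p 5 5 : ℤ) - (p 5 2 + p 5 3 - p 5 5 : ℤ) + (p 5 2 + p 5 3 - p 5 5 : ℤ)
    linear_combination h001 - h002 - h004 - h112 + h132 + h133 - h135 + h212 + h213 - h215 + h221 - h224
  · show p 0 1 = (p 4 5 - p 5 4 + kk : ℤ) - (p 4 5 - p 5 4 + kk : ℤ) + (p 5 2 + p 5 3 - p 5 5 : ℤ)
    linear_combination 2 * h001 - h002 - h004 - h112 + h132 + h133 - h135 + h212 + h213 - h215 + h221 - h224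
  · show p 0 2 = (kk : ℤ) - (kk : ℤ) + (p 5 2 + p 5 3 - p 5 5 : ℤ)
    linear_combination h001 - h004 - h112 + h132 + h133 - h135 + h212 + h213 - h215 + h221 - h224
  · show p 0 3 = (p 4 4 - 2 * p 4 5 + 2 * p 5 3 : ℤ) - (p 4 4 - 2 * p 4 5 + 2 * p 5 3 : ℤ) + (p 5 2 + p 5 3 - p 5 5 : ℤ)
    linear_combination h001 - h002 + h003 - h004 - h112 + h132 + h133 - h135 + h212 + h213 - h215 + h221 - h224
  · show p 0 4 = (p 4 4 - p 4 5 + p 5 3 : ℤ) - (p 4 4 - p 4 5 + p 5 3 : ℤ) + (p 5 2 + p 5 3 - p 5 5 : ℤ)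
    linear_combination h001 - h002 - h112 + h132 + h133 - h135 + h212 + h213 - h215 + h221 - h224
  · show p 0 5 = (-p 4 4 + 2 * p 4 5 - p 5 3 + kk : ℤ) - (-p 4 4 + 2 * p 4 5 - p 5 3 + kk : ℤ) + (p 5 2 + p 5 3 - p 5 5 : ℤ)
    linear_combination h001 - h002 - h004 + h005 - h112 + h132 + h133 - h135 + h212 + h213 - h215 + h221 - h224
  · show p 1 0 = (p 5 2 + p 5 3 - p 5 5 : ℤ) - (p 4 5 - p 5 4 + kk : ℤ) + (p 4 5 - p 5 4 + kk : ℤ)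
    linear_combination h001 - h002 - h004 - h100 - h112 + h132 + h133 - h135 + h212 + h213 - h215 + h221 - h224
  · show p 1 1 = (p 4 5 - p 5 4 + kk : ℤ) - (p 5 2 + p 5 3 - p 5 5 : ℤ) + (p 4 5 - p 5 4 + kk : ℤ)
    linear_combination -h001 + h002 - 2 * h100 + h112 - h121 + 2 * h125 + h131 - h132 - h133 - 2 * h134 + h135 + h200 + h211 - h212 - h213 - 2 * h214 + h215 - h221 - h241 + (1:ℤ) * hkk
  · show p 1 2 = (kk : ℤ) - (p 4 4 - p 4 5 + p 5 3 : ℤ) + (p 4 5 - p 5 4 + kk : ℤ)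
    linear_combination h003 - h100 + h113 - h121 - h124 + 2 * h125 + h131 - h133 - h134 + h200 + h211 - h213 - h214 - h241 + (1:ℤ) * hkk
  · show p 1 3 = (p 4 4 - 2 * p 4 5 + 2 * p 5 3 : ℤ) - (-p 4 4 + 2 * p 4 5 - p 5 3 + kk : ℤ) + (p 4 5 - p 5 4 + kk : ℤ)
    linear_combination h002 - 2 * h003 - h004 - h100 + h112 - 2 * h113 + h121 + 2 * h124 - 3 * h125 - h131 + 3 * h133 - h134 - h200 - h211 + 3 * h213 - h214 - h224 + h241
  · show p 1 4 = (p 4 4 - p 4 5 + p 5 3 : ℤ) - (kk : ℤ) + (p 4 5 - p 5 4 + kk : ℤ)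
    linear_combination h002 - h003 - h004 - h100 + h112 - h113 + h124 + h133 - h134 + h213 - h214 - h224
  · show p 1 5 = (-p 4 4 + 2 * p 4 5 - p 5 3 + kk : ℤ) - (p 4 4 - 2 * p 4 5 + 2 * p 5 3 : ℤ) + (p 4 5 - p 5 4 + kk : ℤ)
    linear_combination -h002 + 3 * h003 - h100 - h112 + 3 * h113 - 2 * h121 - 2 * h124 + 5 * h125 + 2 * h131 - 3 * h133 - h134 + 2 * h200 + 2 * h211 - 3 * h213 - h214 - 2 * h241 + (1:ℤ) * hkk
  · show p 2 0 = (p 5 2 + p 5 3 - p 5 5 : ℤ) - (kk : ℤ) + (kk : ℤ)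
    linear_combination h001 - h002 - h004 - h112 + h132 + h133 - h135 - h200 + h212 + h213 - h215 + h221 - h224
  · show p 2 1 = (p 4 5 - p 5 4 + kk : ℤ) - (p 4 4 - 2 * p 4 5 + 2 * p 5 3 : ℤ) + (kk : ℤ)
    linear_combination h003 - h100 + h113 - h121 - h124 + 3 * h125 + h131 - 2 * h133 - h134 + h200 + h211 - 2 * h213 - h214 - h241 + (1:ℤ) * hkk
  · show p 2 2 = (kk : ℤ) - (p 5 2 + p 5 3 - p 5 5 : ℤ) + (kk : ℤ)
    linear_combination -h001 + h002 + h004 + h112 - h132 - h133 + h135 - h212 - h213 + h215 - h221 + h224 + (1:ℤ) * hkk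
  · show p 2 3 = (p 4 4 - 2 * p 4 5 + 2 * p 5 3 : ℤ) - (p 4 5 - p 5 4 + kk : ℤ) + (kk : ℤ)
    linear_combination h001 - h003 + h100 - h113 + h121 + h124 - 3 * h125 - h131 + 2 * h133 + h134 - h200 - h211 + 2 * h213 + h214 + h221 + h241
  · show p 2 4 = (p 4 4 - p 4 5 + p 5 3 : ℤ) - (-p 4 4 + 2 * p 4 5 - p 5 3 + kk : ℤ) + (kk : ℤ)
    linear_combination h002 - 2 * h003 + h112 - 2 * h113 + h121 + 2 * h124 - 3 * h125 - h131 + 2 * h133 - h200 - h211 + 2 * h213 + h241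
  · show p 2 5 = (-p 4 4 + 2 * p 4 5 - p 5 3 + kk : ℤ) - (p 4 4 - p 4 5 + p 5 3 : ℤ) + (kk : ℤ)
    linear_combination -h002 + 2 * h003 + h004 - h112 + 2 * h113 - h121 - 2 * h124 + 3 * h125 + h131 - 2 * h133 + h200 + h211 - 2 * h213 + h224 - h241 + (1:ℤ) * hkk
  · show p 3 0 = (p 5 2 + p 5 3 - p 5 5 : ℤ) - (p 4 4 - 2 * p 4 5 + 2 * p 5 3 : ℤ) + (p 4 4 - 2 * p 4 5 + 2 * p 5 3 : ℤ)
    linear_combination h001 - h002 - h004 - h100 - h112 + h132 + h133 - h135 - h210 + h212 + h213 - h215 + h221 - h224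
  · show p 3 1 = (p 4 5 - p 5 4 + kk : ℤ) - (kk : ℤ) + (p 4 4 - 2 * p 4 5 + 2 * p 5 3 : ℤ)
    linear_combination -h003 - h004 - h100 - h113 + h124 - h125 + 2 * h133 - h134 - h200 - h211 + 2 * h213 - h214 - h224
  · show p 3 2 = (kk : ℤ) - (-p 4 4 + 2 * p 4 5 - p 5 3 + kk : ℤ) + (p 4 4 - 2 * p 4 5 + 2 * p 5 3 : ℤ)
    linear_combination h002 - 2 * h003 + h112 - 2 * h113 + h121 + 2 * h124 - 4 * h125 - h131 + 3 * h133 - h200 - h211 - h212 + 3 * h213 + h241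
  · show p 3 3 = (p 4 4 - 2 * p 4 5 + 2 * p 5 3 : ℤ) - (p 4 4 - p 4 5 + p 5 3 : ℤ) + (p 4 4 - 2 * p 4 5 + 2 * p 5 3 : ℤ)
    linear_combination -h003 - h113 + h121 + h124 - 3 * h125 - h131 + 3 * h133 - h200 - h211 + 2 * h213 + h241
  · show p 3 4 = (p 4 4 - p 4 5 + p 5 3 : ℤ) - (p 5 2 + p 5 3 - p 5 5 : ℤ) + (p 4 4 - 2 * p 4 5 + 2 * p 5 3 : ℤ)
    linear_combination -h001 + 2 * h002 - 2 * h003 + 2 * h112 - 2 * h113 + h121 + 2 * h124 - 3 * h125 - h131 - h132 + 2 * h133 + h135 - h200 - h211 - h212 + 2 * h213 - h214 + h215 - h221 + h241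
  · show p 3 5 = (-p 4 4 + 2 * p 4 5 - p 5 3 + kk : ℤ) - (p 4 5 - p 5 4 + kk : ℤ) + (p 4 4 - 2 * p 4 5 + 2 * p 5 3 : ℤ)
    linear_combination h001 - h002 + h003 + h100 - h112 + h113 - h125 + h133 + h134 + h213 + h214 - h215 + h221
  · show p 4 0 = (p 5 2 + p 5 3 - p 5 5 : ℤ) - (p 4 4 - p 4 5 + p 5 3 : ℤ) + (p 4 4 - p 4 5 + p 5 3 : ℤ)
    linear_combination h001 - h002 - h004 - h112 - h120 + h132 + h133 - h135 - h200 + h212 + h213 - h215 + h221 - h224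
  · show p 4 1 = (p 4 5 - p 5 4 + kk : ℤ) - (-p 4 4 + 2 * p 4 5 - p 5 3 + kk : ℤ) + (p 4 4 - p 4 5 + p 5 3 : ℤ)
    linear_combination h002 - 2 * h003 - h004 - h100 + h112 - 2 * h113 + 2 * h124 - 2 * h125 - h131 + 2 * h133 - h134 - h200 - h211 + 2 * h213 - h214 - h224 + h241
  · show p 4 2 = (kk : ℤ) - (p 4 5 - p 5 4 + kk : ℤ) + (p 4 4 - p 4 5 + p 5 3 : ℤ)
    linear_combination -h003 - h113 + h121 - h122 + h124 - 2 * h125 - h131 + h133 + h134 - h200 - h211 + h213 + h214 + h241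
  · show p 4 3 = (p 4 4 - 2 * p 4 5 + 2 * p 5 3 : ℤ) - (p 5 2 + p 5 3 - p 5 5 : ℤ) + (p 4 4 - p 4 5 + p 5 3 : ℤ)
    linear_combination h002 - 2 * h003 + h112 - 2 * h113 + h121 - h123 + 2 * h124 - 3 * h125 - h131 - h132 + 2 * h133 + h135 - h200 - h211 - h212 + 2 * h213 + h215 + h241
  · show p 4 4 = (p 4 4 - p 4 5 + p 5 3 : ℤ) - (p 4 4 - 2 * p 4 5 + 2 * p 5 3 : ℤ) + (p 4 4 - p 4 5 + p 5 3 : ℤ)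
    linarith
  · show p 4 5 = (-p 4 4 + 2 * p 4 5 - p 5 3 + kk : ℤ) - (kk : ℤ) + (p 4 4 - p 4 5 + p 5 3 : ℤ)
    linarith
  · show p 5 0 = (p 5 2 + p 5 3 - p 5 5 : ℤ) - (-p 4 4 + 2 * p 4 5 - p 5 3 + kk : ℤ) + (-p 4 4 + 2 * p 4 5 - p 5 3 + kk : ℤ)
    linear_combination h001 - h002 - h004 - h100 - h112 - h130 + h132 + h133 - h135 - h210 + h212 + h213 - h215 + h221 - h224
  · show p 5 1 = (p 4 5 - p 5 4 + kk : ℤ) - (p 4 4 - p 4 5 + p 5 3 : ℤ) + (-p 4 4 + 2 * p 4 5 - p 5 3 + kk : ℤ)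
    linear_combination -h002 + 2 * h003 - h100 - h112 + 2 * h113 - 2 * h121 - 2 * h124 + 4 * h125 + h131 - 2 * h133 - h134 + h200 + h211 - 2 * h213 - h214 - 2 * h241 + (1:ℤ) * hkk
  · show p 5 2 = (kk : ℤ) - (p 4 4 - 2 * p 4 5 + 2 * p 5 3 : ℤ) + (-p 4 4 + 2 * p 4 5 - p 5 3 + kk : ℤ)
    linear_combination -h002 + 3 * h003 + h004 - h112 + 3 * h113 - 2 * h121 - 2 * h124 + 4 * h125 + 2 * h131 - h132 - 3 * h133 + 2 * h200 + 2 * h211 - h212 - 3 * h213 + h224 - 2 * h241 + (1:ℤ) * hkk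
  · show p 5 3 = (p 4 4 - 2 * p 4 5 + 2 * p 5 3 : ℤ) - (kk : ℤ) + (-p 4 4 + 2 * p 4 5 - p 5 3 + kk : ℤ)
    linarith
  · show p 5 4 = (p 4 4 - p 4 5 + p 5 3 : ℤ) - (p 4 5 - p 5 4 + kk : ℤ) + (-p 4 4 + 2 * p 4 5 - p 5 3 + kk : ℤ)
    linarith
  · show p 5 5 = (-p 4 4 + 2 * p 4 5 - p 5 3 + kk : ℤ) - (p 5 2 + p 5 3 - p 5 5 : ℤ) + (-p 4 4 + 2 * p 4 5 - p 5 3 + kk : ℤ)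
    linear_combination -h002 + 3 * h003 + h004 - h112 + 3 * h113 - 2 * h121 - 2 * h124 + 4 * h125 + 2 * h131 - h132 - 3 * h133 + 2 * h200 + 2 * h211 - h212 - 3 * h213 + h224 - 2 * h241 + (1:ℤ) * hkk

private abbrev G4 := Equiv.Perm (Fin 4)

private def etab : Fin 6 → G4 :=
  ![1, Equiv.swap 1 2, Equiv.swap 0 1,
    Equiv.swap 0 2 * Equiv.swap 0 1, Equiv.swap 0 1 * Equiv.swap 0 2, Equiv.swap 0 2]

private lemma hmul6 : ∀ i j, etab i * etab j = etab (mtab i j) := by decide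
private lemma he3 : ∀ i, etab i 3 = 3 := by decide
private lemma hcov : ∀ g : G4, g 3 = 3 → ∃ i, etab i = g := by decide

private def idx6 : G4 → Fin 6 := fun g =>
  if g = etab 1 then 1 else if g = etab 2 then 2 else if g = etab 3 then 3
  else if g = etab 4 then 4 else if g = etab 5 then 5 else 0

private lemma hidx : ∀ i, idx6 (etab i) = i := by decide

private def tsw : Fin 4 → G4 := fun x => Equiv.swap 3 x
private def rG : G4 → G4 := fun g => g * tsw (g⁻¹ 3)
private def Phi (f : G4 × G4 → Fin 4 → ℤ) (a b c : G4) : ℤ := f (a⁻¹*b, b⁻¹*c) (a⁻¹ 3)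
private def Psi (f : G4 × G4 → Fin 4 → ℤ) (vG : G4 → ℤ) (a b : G4) : ℤ :=
  vG ((rG a)⁻¹ * rG b) - Phi f a (rG a) (rG b) + Phi f a b (rG b)

def Wt : Equiv.Perm (Fin 4) → Fin 4 → ℤ := fun g =>
  if g = (1 : Equiv.Perm (Fin 4)) then (![0, 0, 0, 0] : Fin 4 → ℤ)
  else if g = (Equiv.swap (2:Fin 4) 3) then (![1, -1, 0, 0] : Fin 4 → ℤ)
  else if g = (Equiv.swap (1:Fin 4) 2) then (![1, 0, 0, -1] : Fin 4 → ℤ)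
  else if g = (Equiv.swap (1:Fin 4) 3 * Equiv.swap (1:Fin 4) 2) then (![0, 0, 1, -1] : Fin 4 → ℤ)
  else if g = (Equiv.swap (1:Fin 4) 2 * Equiv.swap (1:Fin 4) 3) then (![0, 1, -1, 0] : Fin 4 → ℤ)
  else if g = (Equiv.swap (1:Fin 4) 3) then (![1, 1, 1, -3] : Fin 4 → ℤ)
  else if g = (Equiv.swap (0:Fin 4) 1) then (![0, 0, 1, -1] : Fin 4 → ℤ)
  else if g = (Equiv.swap (0:Fin 4) 1 * Equiv.swap (2:Fin 4) 3) then (![1, 1, 1, -3] : Fin 4 → ℤ)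
  else if g = (Equiv.swap (0:Fin 4) 2 * Equiv.swap (0:Fin 4) 1) then (![0, 1, -1, 0] : Fin 4 → ℤ)
  else if g = (Equiv.swap (0:Fin 4) 3 * Equiv.swap (0:Fin 4) 2 * Equiv.swap (0:Fin 4) 1) then (![0, 0, 0, 0] : Fin 4 → ℤ)
  else if g = (Equiv.swap (0:Fin 4) 2 * Equiv.swap (0:Fin 4) 3 * Equiv.swap (0:Fin 4) 1) then (![1, 0, 0, -1] : Fin 4 → ℤ)
  else if g = (Equiv.swap (0:Fin 4) 3 * Equiv.swap (0:Fin 4) 1) then (![1, -1, 0, 0] : Fin 4 → ℤ)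
  else if g = (Equiv.swap (0:Fin 4) 1 * Equiv.swap (0:Fin 4) 2) then (![1, -1, 0, 0] : Fin 4 → ℤ)
  else if g = (Equiv.swap (0:Fin 4) 1 * Equiv.swap (0:Fin 4) 3 * Equiv.swap (0:Fin 4) 2) then (![0, 1, -1, 0] : Fin 4 → ℤ)
  else if g = (Equiv.swap (0:Fin 4) 2) then (![1, 1, 1, -3] : Fin 4 → ℤ)
  else if g = (Equiv.swap (0:Fin 4) 3 * Equiv.swap (0:Fin 4) 2) then (![1, 0, 0, -1] : Fin 4 → ℤ)
  else if g = (Equiv.swap (0:Fin 4) 2 * Equiv.swap (1:Fin 4) 3) then (![0, 0, 0, 0] : Fin 4 → ℤ)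
  else if g = (Equiv.swap (0:Fin 4) 3 * Equiv.swap (0:Fin 4) 1 * Equiv.swap (0:Fin 4) 2) then (![0, 0, 1, -1] : Fin 4 → ℤ)
  else if g = (Equiv.swap (0:Fin 4) 1 * Equiv.swap (0:Fin 4) 2 * Equiv.swap (0:Fin 4) 3) then (![0, 0, 0, 0] : Fin 4 → ℤ)
  else if g = (Equiv.swap (0:Fin 4) 1 * Equiv.swap (0:Fin 4) 3) then (![1, 0, 0, -1] : Fin 4 → ℤ)
  else if g = (Equiv.swap (0:Fin 4) 2 * Equiv.swap (0:Fin 4) 3) then (![0, 0, 1, -1] : Fin 4 → ℤ)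
  else if g = (Equiv.swap (0:Fin 4) 3) then (![0, 1, -1, 0] : Fin 4 → ℤ)
  else if g = (Equiv.swap (0:Fin 4) 2 * Equiv.swap (0:Fin 4) 1 * Equiv.swap (0:Fin 4) 3) then (![1, -1, 0, 0] : Fin 4 → ℤ)
  else if g = (Equiv.swap (0:Fin 4) 3 * Equiv.swap (1:Fin 4) 2) then (![1, 1, 1, -3] : Fin 4 → ℤ)
  else 0

private lemma hWsum : ∀ g : G4, ∑ x, Wt g x = 0 := by decide

set_option maxHeartbeats 4000000 in
private lemma hWeven : ∀ g h : G4, ∀ x, (2:ℤ) ∣ (Wt g x + Wt h (g⁻¹ x) - Wt (g*h) x) := by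
  decide

private def F0f : G4 → G4 → Fin 4 → ℤ := fun g h x =>
  (Wt g x + Wt h (g⁻¹ x) - Wt (g*h) x) / 2

private lemma h2F0 : ∀ g h : G4, ∀ x, 2 * F0f g h x = Wt g x + Wt h (g⁻¹ x) - Wt (g*h) x :=
  fun g h x => Int.mul_ediv_cancel' (hWeven g h x)

private lemma F0sum : ∀ g h : G4, ∑ x, F0f g h x = 0 := by
  intro g h
  have h2 : 2 * ∑ x, F0f g h x = 0 := by
    rw [Finset.mul_sum]
    have : ∀ x ∈ Finset.univ, 2 * F0f g h x = Wt g x + Wt h (g⁻¹ x) - Wt (g*h) x :=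
      fun x _ => h2F0 g h x
    rw [Finset.sum_congr rfl this, Finset.sum_sub_distrib, Finset.sum_add_distrib]
    have e1 : ∑ x, Wt h (g⁻¹ x) = ∑ x, Wt h x :=
      Equiv.sum_comp (g⁻¹ : Equiv.Perm (Fin 4)) (Wt h)
    rw [e1, hWsum, hWsum, hWsum]
    ring
  linarith

private lemma F0coc : ∀ g h j : G4, ∀ x,
    F0f h j (g⁻¹ x) - F0f (g*h) j x + F0f g (h*j) x - F0f g h x = 0 := by
  intro g h j x
  have e1 := h2F0 h j (g⁻¹ x)
  have e2 := h2F0 (g*h) j x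
  have e3 := h2F0 g (h*j) x
  have e4 := h2F0 g h x
  have a1 : (g*h)⁻¹ x = h⁻¹ (g⁻¹ x) := by rw [mul_inv_rev, Equiv.Perm.mul_apply]
  have a2 : g*(h*j) = g*h*j := by rw [mul_assoc]
  rw [a1] at e2
  rw [a2] at e3
  linarith

private theorem key (f : G4 × G4 → Fin 4 → ℤ)
    (hcoc : ∀ g h j : G4, ∀ x, f (h, j) (g⁻¹ x) - f (g*h, j) x + f (g, h*j) x - f (g, h) x = 0)
    (hsum : ∀ g h : G4, ∑ x, f (g,h) x = 0)
    (hpar : (2:ℤ) ∣ f (Equiv.swap 0 1, Equiv.swap 0 1) 3 + f (1,1) 3) :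
    ∃ u : G4 → Fin 4 → ℤ, (∀ g, ∑ x, u g x = 0) ∧
      ∀ g h x, u h (g⁻¹ x) - u (g*h) x + u g x = f (g,h) x := by
  have hinv3 : ∀ σ : G4, σ 3 = 3 → σ⁻¹ 3 = 3 := by
    intro σ h
    conv_lhs => rw [← h]
    exact Equiv.symm_apply_apply σ 3
  have hC : ∀ i j k, (fun i j => f (etab i, etab j) 3) j k
      - (fun i j => f (etab i, etab j) 3) (mtab i j) k
      + (fun i j => f (etab i, etab j) 3) i (mtab j k)
      - (fun i j => f (etab i, etab j) 3) i j = 0 := by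
    intro i j k
    have h := hcoc (etab i) (etab j) (etab k) 3
    rw [hinv3 _ (he3 i), hmul6 i j, hmul6 j k] at h
    exact h
  obtain ⟨v, hv⟩ := s3cert (fun i j => f (etab i, etab j) 3) hC hpar
  set vG : G4 → ℤ := fun g => v (idx6 g) with hvG
  have hvst : ∀ g h : G4, g 3 = 3 → h 3 = 3 → f (g, h) 3 = vG h - vG (g*h) + vG g := by
    intro g h hg hh
    obtain ⟨i, rfl⟩ := hcov g hg
    obtain ⟨j, rfl⟩ := hcov h hh
    have h2 := hv i j
    simp only [hvG, hmul6 i j, hidx]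
    exact h2
  have ht : ∀ x, tsw x 3 = x := fun x => Equiv.swap_apply_left 3 x
  have htinv : ∀ x, (tsw x)⁻¹ x = 3 := by
    intro x
    conv_lhs => rw [← ht x]
    exact Equiv.symm_apply_apply _ 3
  have hrf3 : ∀ g, rG g 3 = 3 := by
    intro g
    show (g * tsw (g⁻¹ 3)) 3 = 3
    rw [Equiv.Perm.mul_apply, ht, (by exact Equiv.apply_symm_apply g 3 : g (g⁻¹ 3) = 3)]
  have hstab : ∀ a, (rG a)⁻¹ 3 = 3 := fun a => hinv3 _ (hrf3 a)
  have hδΦ : ∀ a b c d : G4,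
      Phi f b c d - Phi f a c d + Phi f a b d - Phi f a b c = 0 := by
    intro a b c d
    have h := hcoc (a⁻¹*b) (b⁻¹*c) (c⁻¹*d) (a⁻¹ 3)
    have e1 : (a⁻¹*b) * (b⁻¹*c) = a⁻¹*c := by group
    have e2 : (b⁻¹*c) * (c⁻¹*d) = b⁻¹*d := by group
    have e3 : ((a⁻¹*b))⁻¹ (a⁻¹ 3) = b⁻¹ 3 := by
      rw [mul_inv_rev, inv_inv, Equiv.Perm.mul_apply, (by exact Equiv.apply_symm_apply a 3 : a (a⁻¹ 3) = 3)]
    rw [e1, e2, e3] at h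
    exact h
  have hΦinv : ∀ h a b c : G4, h 3 = 3 → Phi f (h*a) (h*b) (h*c) = Phi f a b c := by
    intro h a b c hh
    show f ((h*a)⁻¹ * (h*b), (h*b)⁻¹*(h*c)) ((h*a)⁻¹ 3) = _
    have e1 : (h*a)⁻¹ * (h*b) = a⁻¹ * b := by group
    have e2 : (h*b)⁻¹ * (h*c) = b⁻¹ * c := by group
    have e3 : (h*a)⁻¹ 3 = a⁻¹ 3 := by
      rw [mul_inv_rev, Equiv.Perm.mul_apply, hinv3 h hh]
    rw [e1, e2, e3]
    rfl
  have hrfH : ∀ h g : G4, h 3 = 3 → rG (h*g) = h * rG g := by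
    intro h g hh
    show (h*g) * tsw ((h*g)⁻¹ 3) = h * (g * tsw (g⁻¹ 3))
    have e1 : (h*g)⁻¹ 3 = g⁻¹ 3 := by
      rw [mul_inv_rev, Equiv.Perm.mul_apply, hinv3 h hh]
    rw [e1, mul_assoc]
  have hL3 : ∀ a b c : G4, Phi f (rG a) (rG b) (rG c) =
      vG ((rG b)⁻¹ * rG c) - vG ((rG a)⁻¹ * rG c) + vG ((rG a)⁻¹ * rG b) := by
    intro a b c
    have h1 : ((rG a)⁻¹ * rG b) 3 = 3 := by
      rw [Equiv.Perm.mul_apply, hrf3, hstab]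
    have h2 : ((rG b)⁻¹ * rG c) 3 = 3 := by
      rw [Equiv.Perm.mul_apply, hrf3, hstab]
    have h := hvst _ _ h1 h2
    have e1 : ((rG a)⁻¹ * rG b) * ((rG b)⁻¹ * rG c) = (rG a)⁻¹ * rG c := by group
    rw [e1] at h
    show f ((rG a)⁻¹ * rG b, (rG b)⁻¹ * rG c) ((rG a)⁻¹ 3) = _
    rw [hstab a]
    exact h
  have hδΨ : ∀ a b c : G4, Psi f vG b c - Psi f vG a c + Psi f vG a b = Phi f a b c := by
    intro a b c
    have i1 := hδΦ a b c (rG c)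
    have i2 := hδΦ a b (rG b) (rG c)
    have i3 := hδΦ a (rG a) (rG b) (rG c)
    have i4 := hL3 a b c
    simp only [Psi]
    linarith
  have hΨinv : ∀ h a b : G4, h 3 = 3 → Psi f vG (h*a) (h*b) = Psi f vG a b := by
    intro h a b hh
    simp only [Psi]
    rw [hrfH h a hh, hrfH h b hh]
    have e1 : (h * rG a)⁻¹ * (h * rG b) = (rG a)⁻¹ * rG b := by group
    rw [e1, hΦinv h a (rG a) (rG b) hh, hΦinv h a b (rG b) hh]
  set u : G4 → Fin 4 → ℤ := fun g x => Psi f vG (tsw x)⁻¹ ((tsw x)⁻¹ * g) with hu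
  have hshift : ∀ g₁ g₂ : G4, ∀ x, u g₂ (g₁⁻¹ x) =
      Psi f vG ((tsw x)⁻¹ * g₁) ((tsw x)⁻¹ * (g₁*g₂)) := by
    intro g₁ g₂ x
    have hh3 : ((tsw (g₁⁻¹ x))⁻¹ * g₁⁻¹ * tsw x) 3 = 3 := by
      rw [Equiv.Perm.mul_apply, Equiv.Perm.mul_apply, ht, htinv]
    have h := hΨinv ((tsw (g₁⁻¹ x))⁻¹ * g₁⁻¹ * tsw x) ((tsw x)⁻¹ * g₁)
      ((tsw x)⁻¹ * (g₁ * g₂)) hh3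
    have e1 : ((tsw (g₁⁻¹ x))⁻¹ * g₁⁻¹ * tsw x) * ((tsw x)⁻¹ * g₁) = (tsw (g₁⁻¹ x))⁻¹ := by
      group
    have e2 : ((tsw (g₁⁻¹ x))⁻¹ * g₁⁻¹ * tsw x) * ((tsw x)⁻¹ * (g₁ * g₂))
        = (tsw (g₁⁻¹ x))⁻¹ * g₂ := by group
    rw [e1, e2] at h
    simpa only [hu] using h
  have hdu : ∀ g₁ g₂ : G4, ∀ x, u g₂ (g₁⁻¹ x) - u (g₁*g₂) x + u g₁ x = f (g₁, g₂) x := by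
    intro g₁ g₂ x
    rw [hshift]
    have h := hδΨ (tsw x)⁻¹ ((tsw x)⁻¹ * g₁) ((tsw x)⁻¹ * (g₁ * g₂))
    have e0 : Phi f (tsw x)⁻¹ ((tsw x)⁻¹ * g₁) ((tsw x)⁻¹ * (g₁ * g₂)) = f (g₁, g₂) x := by
      show f (((tsw x)⁻¹)⁻¹ * ((tsw x)⁻¹ * g₁),
        ((tsw x)⁻¹ * g₁)⁻¹ * ((tsw x)⁻¹ * (g₁*g₂))) (((tsw x)⁻¹)⁻¹ 3) = _
      have a1 : ((tsw x)⁻¹)⁻¹ * ((tsw x)⁻¹ * g₁) = g₁ := by group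
      have a2 : ((tsw x)⁻¹ * g₁)⁻¹ * ((tsw x)⁻¹ * (g₁*g₂)) = g₂ := by group
      have a3 : ((tsw x)⁻¹)⁻¹ 3 = x := by rw [inv_inv]; exact ht x
      rw [a1, a2, a3]
    rw [e0] at h
    exact h
  have hσ : ∀ g₁ g₂ : G4,
      (∑ x, u g₂ x) - (∑ x, u (g₁*g₂) x) + (∑ x, u g₁ x) = 0 := by
    intro g₁ g₂
    have h1 : ∑ x, u g₂ (g₁⁻¹ x) = ∑ x, u g₂ x :=
      Equiv.sum_comp (g₁⁻¹ : Equiv.Perm (Fin 4)) (u g₂)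
    have h2 : ∑ x, (u g₂ (g₁⁻¹ x) - u (g₁*g₂) x + u g₁ x) = ∑ x, f (g₁,g₂) x :=
      Finset.sum_congr rfl (fun x _ => hdu g₁ g₂ x)
    rw [Finset.sum_add_distrib, Finset.sum_sub_distrib, h1, hsum g₁ g₂] at h2
    exact h2
  have hς1 : (∑ x, u 1 x) = 0 := by
    have h := hσ 1 1
    rw [one_mul] at h
    linarith
  have hpow : ∀ (n : ℕ) (g : G4), ∑ x, u (g^n) x = n * ∑ x, u g x := by
    intro n g
    induction n with
    | zero => rw [pow_zero]; simpa using hς1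
    | succ n ih =>
      have h := hσ (g^n) g
      rw [← pow_succ] at h
      push_cast
      rw [add_mul, one_mul, ← ih]
      linarith
  have horder : ∀ g : G4, ∑ x, u g x = 0 := by
    intro g
    have h24 : g ^ 24 = 1 := by
      have hc : Fintype.card G4 = 24 := by
        rw [Fintype.card_perm]
        rfl
      have h1 : g ^ Fintype.card G4 = 1 := pow_card_eq_one
      rwa [hc] at h1
    have h := hpow 24 g
    rw [h24, hς1] at h
    push_cast at h
    linarith
  exact ⟨u, horder, hdu⟩

private def tau01 : G4 := Equiv.swap 0 1

set_option maxHeartbeats 2000000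

/-- For the action of the symmetric group `S₄` on the tetrahedral
lattice `Λ_t` by permutation of the four coordinates, `H²(S₄, Λ_t) ≅ ℤ/2ℤ`. -/
theorem stmt1
    (ρ : Representation ℤ (Equiv.Perm (Fin 4)) tetrahedralLattice)
    (hρ : ∀ (σ : Equiv.Perm (Fin 4)) (v : tetrahedralLattice) (i : Fin 4),
      ((ρ σ v : Fin 4 → ℤ) i) = (v : Fin 4 → ℤ) (σ⁻¹ i)) :
    Nonempty (groupCohomology (Rep.of ρ) 2 ≃+ ZMod 2) := by
  classical
  set A : Rep ℤ G4 := Rep.of ρ with hA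
  have hact : ∀ (σ : G4) (v : tetrahedralLattice) (i : Fin 4),
      (A.ρ σ v : tetrahedralLattice).1 i = v.1 (σ⁻¹ i) := fun σ v i => hρ σ v i
  set val : (groupCohomology.cocycles₂ A) → ℤ :=
    fun F => (F.1 (tau01, tau01) : tetrahedralLattice).1 3
      + (F.1 (1, 1) : tetrahedralLattice).1 3 with hval
  have hvaladd : ∀ F F', val (F + F') = val F + val F' := by
    intro F F'
    show ((F.1 (tau01, tau01) : tetrahedralLattice).1 3
        + (F'.1 (tau01, tau01) : tetrahedralLattice).1 3)
      + ((F.1 (1, 1) : tetrahedralLattice).1 3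
        + (F'.1 (1, 1) : tetrahedralLattice).1 3)
      = ((F.1 (tau01, tau01) : tetrahedralLattice).1 3
        + (F.1 (1, 1) : tetrahedralLattice).1 3)
      + ((F'.1 (tau01, tau01) : tetrahedralLattice).1 3
        + (F'.1 (1, 1) : tetrahedralLattice).1 3)
    ring
  let χ : (groupCohomology.cocycles₂ A) →+ ZMod 2 :=
    AddMonoidHom.mk' (fun F => ((val F : ℤ) : ZMod 2)) (by
      intro F F'
      show ((val (F + F') : ℤ) : ZMod 2) = ((val F : ℤ) : ZMod 2) + ((val F' : ℤ) : ZMod 2)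
      rw [hvaladd]
      push_cast
      ring)
  have hχapp : ∀ F, χ F = ((val F : ℤ) : ZMod 2) := fun F => rfl
  -- coboundaries are in the kernel
  have hbd : ∀ Fc : groupCohomology.cocycles₂ A, Fc.1 ∈ groupCohomology.coboundaries₂ A → χ Fc = 0 := by
    intro Fc hFc
    obtain ⟨x, hx0⟩ := hFc
    have hx : ∀ g h : G4, A.ρ g (x h) - x (g * h) + x g = Fc.1 (g, h) := fun g h => congrFun hx0 (g, h)
    have h1 : (A.ρ tau01 (x tau01) : tetrahedralLattice).1 3
        - (x (tau01 * tau01) : tetrahedralLattice).1 3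
        + (x tau01 : tetrahedralLattice).1 3
        = (Fc.1 (tau01, tau01) : tetrahedralLattice).1 3 :=
      congrFun (congrArg Subtype.val (hx tau01 tau01)) 3
    have h2 : (A.ρ 1 (x 1) : tetrahedralLattice).1 3
        - (x (1 * 1) : tetrahedralLattice).1 3
        + (x 1 : tetrahedralLattice).1 3
        = (Fc.1 (1, 1) : tetrahedralLattice).1 3 :=
      congrFun (congrArg Subtype.val (hx 1 1)) 3
    rw [hact tau01 (x tau01) 3] at h1
    rw [hact 1 (x 1) 3] at h2
    rw [show tau01⁻¹ (3 : Fin 4) = 3 by decide] at h1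
    rw [show (1 : G4)⁻¹ (3 : Fin 4) = 3 by decide] at h2
    rw [show tau01 * tau01 = 1 by decide] at h1
    rw [show (1 : G4) * 1 = 1 by decide] at h2
    have e1 : val Fc = 2 * (x tau01 : tetrahedralLattice).1 3 := by
      rw [hval]
      dsimp only
      rw [← h1, ← h2]
      ring
    rw [hχapp, e1]
    push_cast
    rw [show ((2:ZMod 2)) = 0 by decide]
    ring
  -- cocycles with trivial χ are coboundaries
  have hker : ∀ Fc : (groupCohomology.cocycles₂ A), χ Fc = 0 →
      Fc.1 ∈ groupCohomology.coboundaries₂ A := by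
    intro Fc h0
    have hdvd : (2:ℤ) ∣ val Fc := by
      rw [hχapp] at h0
      exact (ZMod.intCast_zmod_eq_zero_iff_dvd (val Fc) 2).1 h0
    set f : G4 × G4 → Fin 4 → ℤ := fun gh x => (Fc.1 gh : tetrahedralLattice).1 x with hf
    have hFcoc := (groupCohomology.mem_cocycles₂_def Fc.1).1 Fc.2
    have hcoc : ∀ g h j : G4, ∀ x,
        f (h, j) (g⁻¹ x) - f (g*h, j) x + f (g, h*j) x - f (g, h) x = 0 := by
      intro g h j x
      have h1 : (A.ρ g (Fc.1 (h, j)) : tetrahedralLattice).1 x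
          - (Fc.1 (g*h, j) : tetrahedralLattice).1 x
          + (Fc.1 (g, h*j) : tetrahedralLattice).1 x
          - (Fc.1 (g, h) : tetrahedralLattice).1 x = 0 :=
        congrFun (congrArg Subtype.val (hFcoc g h j)) x
      rw [hact g (Fc.1 (h, j)) x] at h1
      exact h1
    have hsum : ∀ g h : G4, ∑ x, f (g,h) x = 0 := fun g h => (Fc.1 (g,h)).2
    have hpar : (2:ℤ) ∣ f (tau01, tau01) 3 + f (1,1) 3 := hdvd
    obtain ⟨u, hu0, hdu⟩ := key f hcoc hsum hpar
    refine LinearMap.mem_range.2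
      ⟨fun g => (⟨u g, hu0 g⟩ : tetrahedralLattice), ?_⟩
    refine funext fun ⟨g, h⟩ => ?_
    apply Subtype.ext
    funext x
    show (A.ρ g (⟨u h, hu0 h⟩ : tetrahedralLattice) : tetrahedralLattice).1 x
        - u (g * h) x + u g x = (Fc.1 (g, h) : tetrahedralLattice).1 x
    rw [hact g (⟨u h, hu0 h⟩ : tetrahedralLattice) x]
    exact hdu g h x
  -- the nontrivial cocycle
  set F0A : G4 × G4 → tetrahedralLattice :=
    fun gh => (⟨F0f gh.1 gh.2, F0sum gh.1 gh.2⟩ : tetrahedralLattice) with hF0A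
  have hF0mem : F0A ∈ groupCohomology.cocycles₂ A := by
    refine (groupCohomology.mem_cocycles₂_def (A := A) F0A).2 ?_
    intro g h j
    apply Subtype.ext
    funext x
    show (A.ρ g (F0A (h, j)) : tetrahedralLattice).1 x
        - F0f (g*h) j x + F0f g (h*j) x - F0f g h x = 0
    rw [hact g (F0A (h, j)) x]
    exact F0coc g h j x
  have hχF0 : χ ⟨F0A, hF0mem⟩ = 1 := by
    rw [hχapp]
    have e : val ⟨F0A, hF0mem⟩ = F0f tau01 tau01 3 + F0f 1 1 3 := rfl
    rw [e, show F0f tau01 tau01 3 + F0f 1 1 3 = -1 by decide]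
    decide
  -- assemble
  let χlin : (groupCohomology.cocycles₂ A) →ₗ[ℤ] ZMod 2 := χ.toIntLinearMap
  let H2π' : groupCohomology.cocycles₂ A →ₗ[ℤ] groupCohomology A 2 := (groupCohomology.H2π A).hom
  have hle : LinearMap.ker H2π' ≤ LinearMap.ker χlin := fun Fc hFc =>
    hbd Fc ((groupCohomology.H2π_eq_zero_iff Fc).1 hFc)
  let Xbar : (groupCohomology.cocycles₂ A ⧸ LinearMap.ker H2π') →ₗ[ℤ] ZMod 2 :=
    Submodule.liftQ (LinearMap.ker H2π') χlin hle
  have hXapp : ∀ Fc, Xbar (Submodule.Quotient.mk Fc) = χ Fc := fun Fc => rfl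
  have hinj : Function.Injective Xbar := by
    rw [← LinearMap.ker_eq_bot]
    refine (Submodule.eq_bot_iff _).2 ?_
    intro q hq
    obtain ⟨Fc, rfl⟩ := Submodule.Quotient.mk_surjective _ q
    rw [LinearMap.mem_ker, hXapp] at hq
    rw [Submodule.Quotient.mk_eq_zero]
    exact LinearMap.mem_ker.2 ((groupCohomology.H2π_eq_zero_iff Fc).2 (hker Fc hq))
  have hsurj : Function.Surjective Xbar := by
    intro z
    have hz : ∀ w : ZMod 2, w = 0 ∨ w = 1 := by decide
    rcases hz z with rfl | rfl
    · exact ⟨0, map_zero _⟩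
    · exact ⟨Submodule.Quotient.mk ⟨F0A, hF0mem⟩, by rw [hXapp]; exact hχF0⟩
  let E1 : (groupCohomology.cocycles₂ A ⧸ LinearMap.ker H2π') ≃+ ZMod 2 :=
    AddEquiv.ofBijective Xbar.toAddMonoidHom ⟨hinj, hsurj⟩
  have hH2surj : Function.Surjective H2π' :=
    (ModuleCat.epi_iff_surjective (groupCohomology.H2π A)).1 inferInstance
  let E0 : groupCohomology A 2 ≃+ (groupCohomology.cocycles₂ A ⧸ LinearMap.ker H2π') :=
    (LinearMap.quotKerEquivOfSurjective H2π' hH2surj).symm.toAddEquiv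
  exact ⟨E0.trans E1⟩
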